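/- The CABC system (2.1) satisfies the two tetrahedron relations: (A - g)/vbt = (A - B)/ub - (B - g)*u/(a - B - u*v) and vt = u + (B - g)*vb/(A - g - ub*vb). That is, if complex numbers u, ub, ut, ubt, v, vb, vt, vbt satisfy ubt - u = (B' - a)/ut - (B - A)/ub, u - vt - (B - A)/ub + (g - A)/vbt = 0, (u - vt)*((B - a)/u + v) - B + g = 0, and (B - a)/u - (g - A)/vb - ub + v = 0 (with all denominators nonzero), then both displayed relations hold. -/
import Mathlib


/-- Tetrahedron property of the CABC system (2.1): the two tetrahedron
relations `(A - g)/vbt = (A - B)/ub - (B - g) u/(a - B - u v)` and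
`vt = u + (B - g) vb/(A - g - ub vb)` follow from the CABC system. -/
theorem dKdV_CABC_II_tetrahedron
    (u ub ut ubt v vb vt vbt a A B B' g : ℂ)
    (hu : u ≠ 0) (hub : ub ≠ 0) (hut : ut ≠ 0)
    (hvb : vb ≠ 0) (hvbt : vbt ≠ 0)
    (hd1 : a - B - u * v ≠ 0) (hd2 : A - g - ub * vb ≠ 0)
    (hA : ubt - u = (B' - a) / ut - (B - A) / ub)
    (hS : u - vt - (B - A) / ub + (g - A) / vbt = 0)
    (hB : (u - vt) * ((B - a) / u + v) - B + g = 0)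
    (hC : (B - a) / u - (g - A) / vb - ub + v = 0) :
    (A - g) / vbt = (A - B) / ub - (B - g) * u / (a - B - u * v) ∧
    vt = u + (B - g) * vb / (A - g - ub * vb) := by
  field_simp at hS hB hC
  have k1 : (u - vt) * (a - B - u * v) = -(B - g) * u := by linear_combination -hB
  have k2 : (u - vt) * (A - g - ub * vb) = -(B - g) * vb := by
    have := mul_left_cancel₀ hu (show u * ((u - vt) * (A - g - ub * vb)) = u * (-(B - g) * vb) by
      linear_combination (u - vt) * hC - vb * hB)
    exact this
  constructor
  · rw [div_sub_div _ _ hub hd1, div_eq_div_iff hvbt (mul_ne_zero hub hd1)]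
    linear_combination -(a - B - u*v) * hS + ub * vbt * k1
  · have h3 : (B - g) * vb / (A - g - ub * vb) = vt - u := by
      rw [div_eq_iff hd2]; linear_combination k2
    rw [h3]; ring
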